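/- Let S be a minor subset of the flat torus ℝⁿ/ℤⁿ, let p ∈ S, and let t ∈ ℝⁿ/ℤⁿ with t ≠ 0. Then the forward orbit of p under translation by t is not contained in S; that is, there exists an integer k > 0 such that p + k·t ∉ S. -/
import Mathlib

/-- The flat torus `ℝⁿ/ℤⁿ`, modelled as the product of `n` copies of `ℝ/ℤ`. -/
abbrev FlatTorus (n : ℕ) := Fin n → AddCircle (1 : ℝ)

/-- The quotient map `π : ℝⁿ → ℝⁿ/ℤⁿ`. -/
noncomputable def torusProj (n : ℕ) (v : Fin n → ℝ) : FlatTorus n := fun i => (v i : AddCircle (1 : ℝ))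

/-- A subset `S` of `ℝⁿ/ℤⁿ` is *minor* if some translate of `S` is contained in the
image of the open cube `(0, 1/2)ⁿ` under the quotient map. -/
def Minor {n : ℕ} (S : Set (FlatTorus n)) : Prop :=
  ∃ c : FlatTorus n,
    (fun s => s + c) '' S ⊆ torusProj n '' {v | ∀ i, v i ∈ Set.Ioo (0 : ℝ) (1 / 2)}

/-- If `S` is a minor subset of the flat torus, `p ∈ S`, and `t ≠ 0`, then the forward
orbit of `p` under translation by `t` is not contained in `S`. -/
theorem minor_forward_orbit_escapes {n : ℕ} (S : Set (FlatTorus n)) (hS : Minor S)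
    (p : FlatTorus n) (hp : p ∈ S) (t : FlatTorus n) (ht : t ≠ 0) :
    ∃ k : ℕ, 0 < k ∧ p + k • t ∉ S := by
  by_contra hcon
  push_neg at hcon
  obtain ⟨c, hc⟩ := hS
  obtain ⟨i, hti⟩ : ∃ i, t i ≠ 0 := by
    by_contra h'; push_neg at h'; exact ht (funext h')
  have key : ∀ k : ℕ, ∃ x : ℝ, x ∈ Set.Ioo (0:ℝ) (1/2) ∧
      (x : AddCircle (1:ℝ)) = p i + (k+1) • t i + c i := by
    intro k
    have hmem : p + (k+1) • t ∈ S := hcon (k+1) (Nat.succ_pos k)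
    obtain ⟨v, hv, hveq⟩ := hc ⟨p + (k+1) • t, hmem, rfl⟩
    refine ⟨v i, hv i, ?_⟩
    have := congrFun hveq i
    simpa [torusProj] using this
  choose x hx hxeq using key
  -- coe of difference equals t i
  have hdiff : ∀ k : ℕ, ((x (k+1) - x k : ℝ) : AddCircle (1:ℝ)) = t i := by
    intro k
    rw [AddCircle.coe_sub, hxeq (k+1), hxeq k]
    have : (k+1+1) • t i = (k+1) • t i + t i := by rw [succ_nsmul]
    rw [this]
    abel
  set d : ℝ := x 1 - x 0 with hd
  have hdne : d ≠ 0 := by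
    intro h0
    apply hti
    rw [← hdiff 0, ← hd, h0]
    simp
  have hstep : ∀ k : ℕ, x (k+1) - x k = d := by
    intro k
    have h0 : ((x (k+1) - x k - d : ℝ) : AddCircle (1:ℝ)) = 0 := by
      rw [AddCircle.coe_sub, hdiff k, hd, hdiff 0, sub_self]
    rw [AddCircle.coe_eq_zero_iff] at h0
    obtain ⟨m, hm⟩ := h0
    have hb1 := hx (k+1); have hb2 := hx k
    have hb3 := hx 1; have hb4 := hx 0
    simp only [Set.mem_Ioo] at hb1 hb2 hb3 hb4
    simp only [zsmul_eq_mul, mul_one, hd] at hm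
    have hm0 : m = 0 := by
      have h1 : (-1 : ℝ) < (m : ℝ) := by rw [hm]; linarith
      have h2 : (m : ℝ) < 1 := by rw [hm]; linarith
      have h1' : (-1 : ℤ) < m := by exact_mod_cast h1
      have h2' : m < 1 := by exact_mod_cast h2
      omega
    rw [hm0] at hm
    push_cast at hm
    linarith [hm]
  have hsum : ∀ k : ℕ, x k = x 0 + k * d := by
    intro k
    induction k with
    | zero => simp
    | succ k ih =>
      have := hstep k
      push_cast
      linarith
  obtain ⟨k, hk⟩ := exists_nat_gt ((1/2) / |d|)
  have hdpos : 0 < |d| := abs_pos.mpr hdne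
  have hklarge : 1/2 < k * |d| := by
    rw [div_lt_iff₀ hdpos] at hk
    exact hk
  have hb1 := hx k; have hb2 := hx 0
  simp only [Set.mem_Ioo] at hb1 hb2
  have habs : |x k - x 0| < 1/2 := by rw [abs_lt]; constructor <;> linarith
  rw [hsum k] at habs
  have : |(k:ℝ) * d| = k * |d| := by rw [abs_mul, Nat.abs_cast]
  simp only [add_sub_cancel_left] at habs
  rw [this] at habs
  linarith
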